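/- Let f(X) = a_0 + a_1 X + ... + a_n X^n ∈ Z[X] with a_0 a_n ≠ 0. Suppose there exist two distinct primes p and q, two distinct indices j_1, j_2 ∈ {1, ..., n-1} with j_1 + j_2 ≠ n, and two positive integers k_1, k_2 with k_1 > n/j_1 and k_2 > n/j_2, such that: (i) p does not divide a_0, p divides a_i for 0 < i ≤ j_1, p^2 does not divide a_{j_1}, p^{k_1} divides a_i for i > j_1, and p^{k_1+1} does not divide a_n; (ii) q does not divide a_0, q divides a_i for 0 < i ≤ j_2, q^2 does not divide a_{j_2}, q^{k_2} divides a_i for i > j_2, and q^{k_2+1} does not divide a_n; (iii) gcd(k_1 − 1, n − j_1) = gcd(k_2 − 1, n − j_2) = 1. Then f is irreducible over Q. -/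

import Mathlib

set_option maxHeartbeats 1000000
set_option linter.unusedVariables false
open Polynomial Finset

namespace Cor146

variable (p : ℕ) (μ : ℚ)

noncomputable def ww (g : Polynomial ℤ) (i : ℕ) : ℚ :=
  (padicValInt p (g.coeff i) : ℚ) - μ * i

noncomputable def wm (g : Polynomial ℤ) (hg : g ≠ 0) : ℚ :=
  g.support.inf' (Polynomial.nonempty_support_iff.mpr hg) (ww p μ g)

noncomputable def mset (g : Polynomial ℤ) (hg : g ≠ 0) : Finset ℕ :=
  g.support.filter (fun i => ww p μ g i = wm p μ g hg)

lemma mset_nonempty (g : Polynomial ℤ) (hg : g ≠ 0) : (mset p μ g hg).Nonempty := by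
  obtain ⟨i, hi, hval⟩ := Finset.exists_mem_eq_inf'
    (Polynomial.nonempty_support_iff.mpr hg) (ww p μ g)
  exact ⟨i, Finset.mem_filter.mpr ⟨hi, hval.symm⟩⟩

noncomputable def ii (g : Polynomial ℤ) (hg : g ≠ 0) : ℕ :=
  (mset p μ g hg).min' (mset_nonempty p μ g hg)

noncomputable def jj (g : Polynomial ℤ) (hg : g ≠ 0) : ℕ :=
  (mset p μ g hg).max' (mset_nonempty p μ g hg)

lemma wm_le (g : Polynomial ℤ) (hg : g ≠ 0) {i : ℕ} (h : i ∈ g.support) :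
    wm p μ g hg ≤ ww p μ g i := Finset.inf'_le _ h

lemma ii_mem (g : Polynomial ℤ) (hg : g ≠ 0) :
    ii p μ g hg ∈ g.support ∧ ww p μ g (ii p μ g hg) = wm p μ g hg := by
  have := (mset p μ g hg).min'_mem (mset_nonempty p μ g hg)
  exact Finset.mem_filter.mp this

lemma jj_mem (g : Polynomial ℤ) (hg : g ≠ 0) :
    jj p μ g hg ∈ g.support ∧ ww p μ g (jj p μ g hg) = wm p μ g hg := by
  have := (mset p μ g hg).max'_mem (mset_nonempty p μ g hg)
  exact Finset.mem_filter.mp this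

lemma lt_ii_strict (g : Polynomial ℤ) (hg : g ≠ 0) {i : ℕ} (h : i ∈ g.support)
    (hlt : i < ii p μ g hg) : wm p μ g hg < ww p μ g i := by
  rcases lt_or_eq_of_le (wm_le p μ g hg h) with h' | h'
  · exact h'
  · exact absurd ((mset p μ g hg).min'_le i (Finset.mem_filter.mpr ⟨h, h'.symm⟩))
      (not_le.mpr hlt)

lemma gt_jj_strict (g : Polynomial ℤ) (hg : g ≠ 0) {i : ℕ} (h : i ∈ g.support)
    (hlt : jj p μ g hg < i) : wm p μ g hg < ww p μ g i := by
  rcases lt_or_eq_of_le (wm_le p μ g hg h) with h' | h'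
  · exact h'
  · exact absurd ((mset p μ g hg).le_max' i (Finset.mem_filter.mpr ⟨h, h'.symm⟩))
      (not_le.mpr hlt)

lemma ii_min (g : Polynomial ℤ) (hg : g ≠ 0) {i : ℕ} (h : i ∈ g.support)
    (hval : ww p μ g i = wm p μ g hg) : ii p μ g hg ≤ i :=
  (mset p μ g hg).min'_le i (Finset.mem_filter.mpr ⟨h, hval⟩)

lemma jj_max (g : Polynomial ℤ) (hg : g ≠ 0) {i : ℕ} (h : i ∈ g.support)
    (hval : ww p μ g i = wm p μ g hg) : i ≤ jj p μ g hg :=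
  (mset p μ g hg).le_max' i (Finset.mem_filter.mpr ⟨h, hval⟩)

lemma ii_le_jj (g : Polynomial ℤ) (hg : g ≠ 0) : ii p μ g hg ≤ jj p μ g hg :=
  jj_max p μ g hg (ii_mem p μ g hg).1 (ii_mem p μ g hg).2

lemma slope_mono {μ ν : ℚ} (hμν : μ < ν) (g : Polynomial ℤ) (hg : g ≠ 0) :
    jj p μ g hg ≤ ii p ν g hg := by
  by_contra hc
  push_neg at hc
  have h1 : ww p μ g (jj p μ g hg) = wm p μ g hg := (jj_mem p μ g hg).2
  have h1' : wm p μ g hg ≤ ww p μ g (ii p ν g hg) := wm_le p μ g hg (ii_mem p ν g hg).1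
  have h2 : ww p ν g (ii p ν g hg) = wm p ν g hg := (ii_mem p ν g hg).2
  have h2' : wm p ν g hg ≤ ww p ν g (jj p μ g hg) := wm_le p ν g hg (jj_mem p μ g hg).1
  rw [← h1] at h1'
  rw [← h2] at h2'
  unfold ww at h1' h2'
  have hba : ((ii p ν g hg : ℕ) : ℚ) < ((jj p μ g hg : ℕ) : ℚ) := by exact_mod_cast hc
  nlinarith [mul_pos (sub_pos.mpr hμν) (sub_pos.mpr hba)]


section Gauss

variable [Fact p.Prime]

lemma exists_pair (g h : Polynomial ℤ) (l : ℕ) (hl : (g * h).coeff l ≠ 0) :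
    ∃ i j : ℕ, i + j = l ∧ g.coeff i ≠ 0 ∧ h.coeff j ≠ 0 ∧
      padicValInt p (g.coeff i) + padicValInt p (h.coeff j) ≤
        padicValInt p ((g * h).coeff l) := by
  classical
  set S := (antidiagonal l).filter (fun x : ℕ × ℕ => g.coeff x.1 * h.coeff x.2 ≠ 0) with hSdef
  have hcoeff : (g * h).coeff l = ∑ x ∈ antidiagonal l, g.coeff x.1 * h.coeff x.2 :=
    Polynomial.coeff_mul g h l
  have hS : S.Nonempty := by
    by_contra hemp
    apply hl
    rw [hcoeff]
    apply Finset.sum_eq_zero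
    intro x hx
    by_contra hne
    exact hemp ⟨x, Finset.mem_filter.mpr ⟨hx, hne⟩⟩
  obtain ⟨x₀, hx₀, hmin⟩ := Finset.exists_min_image S
    (fun x : ℕ × ℕ => padicValInt p (g.coeff x.1) + padicValInt p (h.coeff x.2)) hS
  obtain ⟨hx₀ad, hx₀ne⟩ := Finset.mem_filter.mp hx₀
  have hg0 : g.coeff x₀.1 ≠ 0 := left_ne_zero_of_mul hx₀ne
  have hh0 : h.coeff x₀.2 ≠ 0 := right_ne_zero_of_mul hx₀ne
  set M := padicValInt p (g.coeff x₀.1) + padicValInt p (h.coeff x₀.2) with hM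
  have hdvd : (p : ℤ) ^ M ∣ (g * h).coeff l := by
    rw [hcoeff]
    apply Finset.dvd_sum
    intro x hx
    by_cases hzero : g.coeff x.1 * h.coeff x.2 = 0
    · rw [hzero]; exact dvd_zero _
    · have hxS : x ∈ S := Finset.mem_filter.mpr ⟨hx, hzero⟩
      have hle := hmin x hxS
      rw [padicValInt_dvd_iff]
      right
      rw [padicValInt.mul (left_ne_zero_of_mul hzero) (right_ne_zero_of_mul hzero)]
      exact hle
  refine ⟨x₀.1, x₀.2, Finset.HasAntidiagonal.mem_antidiagonal.mp hx₀ad, hg0, hh0, ?_⟩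
  rcases (padicValInt_dvd_iff M ((g * h).coeff l)).mp hdvd with h0 | hle
  · exact absurd h0 hl
  · exact hle

lemma coeff_exact (g h : Polynomial ℤ) (i₀ j₀ : ℕ)
    (hg0 : g.coeff i₀ ≠ 0) (hh0 : h.coeff j₀ ≠ 0)
    (hstrict : ∀ x ∈ antidiagonal (i₀ + j₀), x ≠ (i₀, j₀) →
      g.coeff x.1 * h.coeff x.2 ≠ 0 →
      padicValInt p (g.coeff i₀) + padicValInt p (h.coeff j₀) <
        padicValInt p (g.coeff x.1) + padicValInt p (h.coeff x.2)) :
    (g * h).coeff (i₀ + j₀) ≠ 0 ∧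
      padicValInt p ((g * h).coeff (i₀ + j₀)) =
        padicValInt p (g.coeff i₀) + padicValInt p (h.coeff j₀) := by
  classical
  set M := padicValInt p (g.coeff i₀) + padicValInt p (h.coeff j₀) with hM
  have hmem : (i₀, j₀) ∈ antidiagonal (i₀ + j₀) := Finset.HasAntidiagonal.mem_antidiagonal.mpr rfl
  have hcoeff : (g * h).coeff (i₀ + j₀) = g.coeff i₀ * h.coeff j₀ +
      ∑ x ∈ (antidiagonal (i₀ + j₀)).erase (i₀, j₀), g.coeff x.1 * h.coeff x.2 := by
    rw [Polynomial.coeff_mul,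
      ← Finset.add_sum_erase _ (fun x : ℕ × ℕ => g.coeff x.1 * h.coeff x.2) hmem]
  have hterm0 : padicValInt p (g.coeff i₀ * h.coeff j₀) = M := padicValInt.mul hg0 hh0
  have htne : g.coeff i₀ * h.coeff j₀ ≠ 0 := mul_ne_zero hg0 hh0
  have hrest : (p : ℤ) ^ (M + 1) ∣
      ∑ x ∈ (antidiagonal (i₀ + j₀)).erase (i₀, j₀), g.coeff x.1 * h.coeff x.2 := by
    apply Finset.dvd_sum
    intro x hx
    obtain ⟨hxne, hxad⟩ := Finset.mem_erase.mp hx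
    by_cases hzero : g.coeff x.1 * h.coeff x.2 = 0
    · rw [hzero]; exact dvd_zero _
    · have := hstrict x hxad hxne hzero
      rw [padicValInt_dvd_iff]
      right
      rw [padicValInt.mul (left_ne_zero_of_mul hzero) (right_ne_zero_of_mul hzero)]
      omega
  have hnotdvd : ¬ (p : ℤ) ^ (M + 1) ∣ g.coeff i₀ * h.coeff j₀ := by
    rw [padicValInt_dvd_iff]
    push_neg
    exact ⟨htne, by omega⟩
  have hsplit : g.coeff i₀ * h.coeff j₀ =
      (g * h).coeff (i₀ + j₀) -
        ∑ x ∈ (antidiagonal (i₀ + j₀)).erase (i₀, j₀), g.coeff x.1 * h.coeff x.2 := by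
    rw [hcoeff]; ring
  have hcne : (g * h).coeff (i₀ + j₀) ≠ 0 := by
    intro hzero
    apply hnotdvd
    rw [hsplit, hzero, zero_sub]
    exact dvd_neg.mpr hrest
  have hMdvd : (p : ℤ) ^ M ∣ (g * h).coeff (i₀ + j₀) := by
    rw [hcoeff]
    apply dvd_add
    · rw [padicValInt_dvd_iff]; right; omega
    · exact dvd_trans (pow_dvd_pow _ (by omega)) hrest
  have hMle : M ≤ padicValInt p ((g * h).coeff (i₀ + j₀)) := by
    rcases (padicValInt_dvd_iff M _).mp hMdvd with h0 | hle
    · exact absurd h0 hcne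
    · exact hle
  have hMlt : ¬ (p : ℤ) ^ (M + 1) ∣ (g * h).coeff (i₀ + j₀) := by
    intro hdvd
    apply hnotdvd
    rw [hsplit]
    exact dvd_sub hdvd hrest
  refine ⟨hcne, ?_⟩
  have h2 : ¬ ((g * h).coeff (i₀ + j₀) = 0 ∨ M + 1 ≤ padicValInt p ((g * h).coeff (i₀ + j₀))) := by
    rw [← padicValInt_dvd_iff]; exact hMlt
  push_neg at h2
  omega

lemma lower (g h : Polynomial ℤ) {l : ℕ} (hl : l ∈ (g * h).support) :
    ∃ i j : ℕ, i + j = l ∧ i ∈ g.support ∧ j ∈ h.support ∧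
      ww p μ g i + ww p μ h j ≤ ww p μ (g * h) l := by
  obtain ⟨i, j, hij, hgi, hhj, hv⟩ := exists_pair p g h l (mem_support_iff.mp hl)
  refine ⟨i, j, hij, mem_support_iff.mpr hgi, mem_support_iff.mpr hhj, ?_⟩
  unfold ww
  have hμ : μ * i + μ * j = μ * l := by rw [← hij]; push_cast; ring
  have hv' : ((padicValInt p (g.coeff i) : ℚ) + padicValInt p (h.coeff j))
      ≤ (padicValInt p ((g * h).coeff l) : ℚ) := by exact_mod_cast hv
  linarith

lemma gauss_ii (g h : Polynomial ℤ) (hg : g ≠ 0) (hh : h ≠ 0) (hgh : g * h ≠ 0) :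
    wm p μ (g * h) hgh = wm p μ g hg + wm p μ h hh ∧
    ii p μ (g * h) hgh = ii p μ g hg + ii p μ h hh := by
  obtain ⟨hgI, hgIv⟩ := ii_mem p μ g hg
  obtain ⟨hhI, hhIv⟩ := ii_mem p μ h hh
  set i₀ := ii p μ g hg with hi₀
  set j₀ := ii p μ h hh with hj₀
  have hstrict : ∀ x ∈ antidiagonal (i₀ + j₀), x ≠ (i₀, j₀) →
      g.coeff x.1 * h.coeff x.2 ≠ 0 →
      padicValInt p (g.coeff i₀) + padicValInt p (h.coeff j₀) <
        padicValInt p (g.coeff x.1) + padicValInt p (h.coeff x.2) := by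
    intro x hxad hxne hxz
    have hsum : x.1 + x.2 = i₀ + j₀ := mem_antidiagonal.mp hxad
    have hg1 : x.1 ∈ g.support := mem_support_iff.mpr (left_ne_zero_of_mul hxz)
    have hh1 : x.2 ∈ h.support := mem_support_iff.mpr (right_ne_zero_of_mul hxz)
    have hcase : x.1 < i₀ ∨ x.2 < j₀ := by
      by_contra hc; push_neg at hc
      apply hxne
      have h1 : x.1 = i₀ := by omega
      have h2 : x.2 = j₀ := by omega
      exact Prod.ext h1 h2
    have hq : ww p μ g i₀ + ww p μ h j₀ < ww p μ g x.1 + ww p μ h x.2 := by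
      rcases hcase with hlt | hlt
      · have h1 := lt_ii_strict p μ g hg hg1 hlt
        have h2 := wm_le p μ h hh hh1
        rw [hgIv, hhIv]; linarith
      · have h1 := lt_ii_strict p μ h hh hh1 hlt
        have h2 := wm_le p μ g hg hg1
        rw [hgIv, hhIv]; linarith
    have hc : (x.1 : ℚ) + (x.2 : ℚ) = (i₀ : ℚ) + (j₀ : ℚ) := by exact_mod_cast hsum
    have hμ : μ * x.1 + μ * x.2 = μ * i₀ + μ * j₀ := by
      rw [← mul_add, ← mul_add, hc]
    unfold ww at hq
    have hlt2 : (padicValInt p (g.coeff i₀) : ℚ) + padicValInt p (h.coeff j₀) <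
        (padicValInt p (g.coeff x.1) : ℚ) + padicValInt p (h.coeff x.2) := by linarith
    exact_mod_cast hlt2
  obtain ⟨hne, hval⟩ := coeff_exact p g h i₀ j₀
    (mem_support_iff.mp hgI) (mem_support_iff.mp hhI) hstrict
  have hmemf : i₀ + j₀ ∈ (g * h).support := mem_support_iff.mpr hne
  have hwwf : ww p μ (g * h) (i₀ + j₀) = wm p μ g hg + wm p μ h hh := by
    unfold ww
    rw [hval, ← hgIv, ← hhIv]
    unfold ww
    push_cast
    ring
  have hle : wm p μ (g * h) hgh ≤ wm p μ g hg + wm p μ h hh := by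
    rw [← hwwf]; exact wm_le p μ _ hgh hmemf
  have hge : ∀ l ∈ (g * h).support, wm p μ g hg + wm p μ h hh ≤ ww p μ (g * h) l := by
    intro l hl
    obtain ⟨i, j, hij, hgi, hhj, hv⟩ := lower p μ g h hl
    have h1 := wm_le p μ g hg hgi
    have h2 := wm_le p μ h hh hhj
    linarith
  have hwm : wm p μ (g * h) hgh = wm p μ g hg + wm p μ h hh := by
    refine le_antisymm hle ?_
    obtain ⟨hFmem, hFval⟩ := ii_mem p μ (g * h) hgh
    rw [← hFval]
    exact hge _ hFmem
  refine ⟨hwm, ?_⟩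
  have hmin : ∀ l ∈ (g * h).support, ww p μ (g * h) l = wm p μ (g * h) hgh →
      i₀ + j₀ ≤ l := by
    intro l hl hval'
    obtain ⟨i, j, hij, hgi, hhj, hv⟩ := lower p μ g h hl
    have h1 := wm_le p μ g hg hgi
    have h2 := wm_le p μ h hh hhj
    rw [hval', hwm] at hv
    have e1 : ww p μ g i = wm p μ g hg := by linarith
    have e2 : ww p μ h j = wm p μ h hh := by linarith
    have := ii_min p μ g hg hgi e1
    have := ii_min p μ h hh hhj e2
    omega
  have ha : ii p μ (g * h) hgh ≤ i₀ + j₀ :=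
    ii_min p μ _ hgh hmemf (hwwf.trans hwm.symm)
  have hb : i₀ + j₀ ≤ ii p μ (g * h) hgh :=
    hmin _ (ii_mem p μ _ hgh).1 (ii_mem p μ _ hgh).2
  omega

lemma gauss_jj (g h : Polynomial ℤ) (hg : g ≠ 0) (hh : h ≠ 0) (hgh : g * h ≠ 0) :
    jj p μ (g * h) hgh = jj p μ g hg + jj p μ h hh := by
  have hwm := (gauss_ii p μ g h hg hh hgh).1
  obtain ⟨hgI, hgIv⟩ := jj_mem p μ g hg
  obtain ⟨hhI, hhIv⟩ := jj_mem p μ h hh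
  set i₀ := jj p μ g hg with hi₀
  set j₀ := jj p μ h hh with hj₀
  have hstrict : ∀ x ∈ antidiagonal (i₀ + j₀), x ≠ (i₀, j₀) →
      g.coeff x.1 * h.coeff x.2 ≠ 0 →
      padicValInt p (g.coeff i₀) + padicValInt p (h.coeff j₀) <
        padicValInt p (g.coeff x.1) + padicValInt p (h.coeff x.2) := by
    intro x hxad hxne hxz
    have hsum : x.1 + x.2 = i₀ + j₀ := mem_antidiagonal.mp hxad
    have hg1 : x.1 ∈ g.support := mem_support_iff.mpr (left_ne_zero_of_mul hxz)
    have hh1 : x.2 ∈ h.support := mem_support_iff.mpr (right_ne_zero_of_mul hxz)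
    have hcase : i₀ < x.1 ∨ j₀ < x.2 := by
      by_contra hc; push_neg at hc
      apply hxne
      have h1 : x.1 = i₀ := by omega
      have h2 : x.2 = j₀ := by omega
      exact Prod.ext h1 h2
    have hq : ww p μ g i₀ + ww p μ h j₀ < ww p μ g x.1 + ww p μ h x.2 := by
      rcases hcase with hlt | hlt
      · have h1 := gt_jj_strict p μ g hg hg1 hlt
        have h2 := wm_le p μ h hh hh1
        rw [hgIv, hhIv]; linarith
      · have h1 := gt_jj_strict p μ h hh hh1 hlt
        have h2 := wm_le p μ g hg hg1
        rw [hgIv, hhIv]; linarith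
    have hc : (x.1 : ℚ) + (x.2 : ℚ) = (i₀ : ℚ) + (j₀ : ℚ) := by exact_mod_cast hsum
    have hμ : μ * x.1 + μ * x.2 = μ * i₀ + μ * j₀ := by
      rw [← mul_add, ← mul_add, hc]
    unfold ww at hq
    have hlt2 : (padicValInt p (g.coeff i₀) : ℚ) + padicValInt p (h.coeff j₀) <
        (padicValInt p (g.coeff x.1) : ℚ) + padicValInt p (h.coeff x.2) := by linarith
    exact_mod_cast hlt2
  obtain ⟨hne, hval⟩ := coeff_exact p g h i₀ j₀
    (mem_support_iff.mp hgI) (mem_support_iff.mp hhI) hstrict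
  have hmemf : i₀ + j₀ ∈ (g * h).support := mem_support_iff.mpr hne
  have hwwf : ww p μ (g * h) (i₀ + j₀) = wm p μ g hg + wm p μ h hh := by
    unfold ww
    rw [hval, ← hgIv, ← hhIv]
    unfold ww
    push_cast
    ring
  have hmax : ∀ l ∈ (g * h).support, ww p μ (g * h) l = wm p μ (g * h) hgh →
      l ≤ i₀ + j₀ := by
    intro l hl hval'
    obtain ⟨i, j, hij, hgi, hhj, hv⟩ := lower p μ g h hl
    have h1 := wm_le p μ g hg hgi
    have h2 := wm_le p μ h hh hhj
    rw [hval', hwm] at hv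
    have e1 : ww p μ g i = wm p μ g hg := by linarith
    have e2 : ww p μ h j = wm p μ h hh := by linarith
    have := jj_max p μ g hg hgi e1
    have := jj_max p μ h hh hhj e2
    omega
  have ha : i₀ + j₀ ≤ jj p μ (g * h) hgh :=
    jj_max p μ _ hgh hmemf (hwwf.trans hwm.symm)
  have hb : jj p μ (g * h) hgh ≤ i₀ + j₀ :=
    hmax _ (jj_mem p μ _ hgh).1 (jj_mem p μ _ hgh).2
  omega


lemma core (n j k : ℕ) (g h : Polynomial ℤ)
    (hj1 : 1 ≤ j) (hjn : j + 1 ≤ n) (hk : n < k * j)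
    (hgcd : Nat.gcd (k - 1) (n - j) = 1)
    (hdeg : (g * h).natDegree = n)
    (h0 : ¬ (p : ℤ) ∣ (g * h).coeff 0)
    (h1 : ∀ i, 0 < i → i ≤ j → (p : ℤ) ∣ (g * h).coeff i)
    (h2 : ¬ (p : ℤ) ^ 2 ∣ (g * h).coeff j)
    (h3 : ∀ i, j < i → i ≤ n → (p : ℤ) ^ k ∣ (g * h).coeff i)
    (h4 : ¬ (p : ℤ) ^ (k + 1) ∣ (g * h).coeff n)
    (hgd : 1 ≤ g.natDegree) (hhd : 1 ≤ h.natDegree) :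
    g.natDegree = j ∨ g.natDegree = n - j := by
  classical
  have hk2 : 2 ≤ k := by
    by_contra hc
    push_neg at hc
    have := Nat.mul_le_mul_right j (Nat.lt_succ_iff.mp hc)
    simp only [one_mul] at this
    omega
  have hg0 : g ≠ 0 := fun hz => by simp [hz] at hgd
  have hh0 : h ≠ 0 := fun hz => by simp [hz] at hhd
  have hF : g * h ≠ 0 := mul_ne_zero hg0 hh0
  have hrs : g.natDegree + h.natDegree = n := by
    rw [← hdeg, Polynomial.natDegree_mul hg0 hh0]
  set r := g.natDegree with hrdef
  set s := h.natDegree with hsdef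
  -- coefficient valuation facts for F = g * h
  have hF0 : (g * h).coeff 0 ≠ 0 := fun hz => h0 (hz ▸ dvd_zero _)
  have hvF0 : padicValInt p ((g * h).coeff 0) = 0 := by
    by_contra hne
    have hge : 1 ≤ padicValInt p ((g * h).coeff 0) := by omega
    exact h0 (by simpa using (padicValInt_dvd_iff 1 ((g * h).coeff 0)).mpr (Or.inr hge))
  have hFj : (g * h).coeff j ≠ 0 := fun hz => h2 (hz ▸ dvd_zero _)
  have hvFj : padicValInt p ((g * h).coeff j) = 1 := by
    have hd1 : (p : ℤ) ^ 1 ∣ (g * h).coeff j := by simpa using h1 j (by omega) le_rfl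
    rcases (padicValInt_dvd_iff 1 _).mp hd1 with hz | hge
    · exact absurd hz hFj
    · have hlt : ¬ 2 ≤ padicValInt p ((g * h).coeff j) := fun hge2 =>
        h2 ((padicValInt_dvd_iff 2 _).mpr (Or.inr hge2))
      omega
  have hFn : (g * h).coeff n ≠ 0 := fun hz => h4 (hz ▸ dvd_zero _)
  have hvFn : padicValInt p ((g * h).coeff n) = k := by
    rcases (padicValInt_dvd_iff k _).mp (h3 n (by omega) le_rfl) with hz | hge
    · exact absurd hz hFn
    · have hlt : ¬ k + 1 ≤ padicValInt p ((g * h).coeff n) := fun hge2 =>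
        h4 ((padicValInt_dvd_iff (k + 1) _).mpr (Or.inr hge2))
      omega
  have hsupple : ∀ i ∈ (g * h).support, i ≤ n := fun i hi =>
    hdeg ▸ Polynomial.le_natDegree_of_mem_supp i hi
  have hlow1 : ∀ i ∈ (g * h).support, 0 < i → i ≤ j →
      1 ≤ padicValInt p ((g * h).coeff i) := by
    intro i hi hpos hle
    have hd1 : (p : ℤ) ^ 1 ∣ (g * h).coeff i := by simpa using h1 i hpos hle
    rcases (padicValInt_dvd_iff 1 _).mp hd1 with hz | hge
    · exact absurd hz (mem_support_iff.mp hi)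
    · exact hge
  have hlowk : ∀ i ∈ (g * h).support, j < i →
      k ≤ padicValInt p ((g * h).coeff i) := by
    intro i hi hlt
    rcases (padicValInt_dvd_iff k _).mp (h3 i hlt (hsupple i hi)) with hz | hge
    · exact absurd hz (mem_support_iff.mp hi)
    · exact hge
  -- slopes
  set μ₁ : ℚ := 1 / (j : ℚ) with hμ₁
  set μ₂ : ℚ := ((k : ℚ) - 1) / ((n : ℚ) - (j : ℚ)) with hμ₂
  have hjQ : (0 : ℚ) < j := by exact_mod_cast hj1
  have hjnQ : ((j : ℚ)) + 1 ≤ n := by exact_mod_cast hjn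
  have hnjQ : (0 : ℚ) < (n : ℚ) - j := by linarith
  have hkQ : (0 : ℚ) < (k : ℚ) - 1 := by
    have : (2 : ℚ) ≤ k := by exact_mod_cast hk2
    linarith
  have hkjQ : (n : ℚ) < (k : ℚ) * j := by exact_mod_cast hk
  have hμ₁pos : 0 < μ₁ := by rw [hμ₁]; positivity
  have hμ₂pos : 0 < μ₂ := div_pos hkQ hnjQ
  have hμlt : μ₁ < μ₂ := by
    rw [hμ₁, hμ₂, div_lt_div_iff₀ hjQ hnjQ]
    nlinarith
  have hμ₂nj : μ₂ * ((n : ℚ) - j) = (k : ℚ) - 1 := by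
    rw [hμ₂]; field_simp
  -- slope-1 Newton data of F
  have hA0 : ww p μ₁ (g * h) 0 = 0 := by
    unfold ww; rw [hvF0]; push_cast; ring
  have hAj : ww p μ₁ (g * h) j = 0 := by
    unfold ww; rw [hvFj, hμ₁]
    push_cast
    field_simp
    ring
  have hApos : ∀ i ∈ (g * h).support, i ≠ 0 → i ≠ j → 0 < ww p μ₁ (g * h) i := by
    intro i hi hi0 hij
    have hin : i ≤ n := hsupple i hi
    unfold ww
    rcases lt_or_ge i j with hlt | hge
    · have hv := hlow1 i hi (by omega) (le_of_lt hlt)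
      have hvQ : (1 : ℚ) ≤ padicValInt p ((g * h).coeff i) := by exact_mod_cast hv
      have hmu : μ₁ * i < 1 := by
        rw [hμ₁, div_mul_eq_mul_div, one_mul, div_lt_one hjQ]
        exact_mod_cast hlt
      linarith
    · have hjlt : j < i := by omega
      have hv := hlowk i hi hjlt
      have hvQ : (k : ℚ) ≤ padicValInt p ((g * h).coeff i) := by exact_mod_cast hv
      have hiQ : (i : ℚ) ≤ n := by exact_mod_cast hin
      have hmu : μ₁ * i < k := by
        rw [hμ₁, div_mul_eq_mul_div, one_mul, div_lt_iff₀ hjQ]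
        nlinarith
      linarith
  have h0mem : (0 : ℕ) ∈ (g * h).support := mem_support_iff.mpr hF0
  have hjmem : j ∈ (g * h).support := mem_support_iff.mpr hFj
  have hnmem : n ∈ (g * h).support := mem_support_iff.mpr hFn
  have hwm1F : wm p μ₁ (g * h) hF = 0 := by
    apply le_antisymm
    · rw [← hA0]; exact wm_le p μ₁ _ hF h0mem
    · unfold wm
      apply Finset.le_inf'
      intro i hi
      rcases eq_or_ne i 0 with rfl | hi0
      · rw [hA0]
      rcases eq_or_ne i j with rfl | hij
      · rw [hAj]
      · exact le_of_lt (hApos i hi hi0 hij)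
  have hjj1F : jj p μ₁ (g * h) hF = j := by
    apply le_antisymm
    · obtain ⟨hmem, hval⟩ := jj_mem p μ₁ (g * h) hF
      by_contra hc
      push_neg at hc
      have hpos := hApos _ hmem (by omega) (by omega)
      rw [hval, hwm1F] at hpos
      exact lt_irrefl _ hpos
    · exact jj_max p μ₁ _ hF hjmem (by rw [hAj, hwm1F])
  -- slope-2 Newton data of F
  have hAj2 : ww p μ₂ (g * h) j = 1 - μ₂ * j := by
    unfold ww; rw [hvFj]; push_cast; ring
  have hmuexp : μ₂ * ((n : ℚ) - j) = μ₂ * n - μ₂ * j := by ring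
  have hAn2 : ww p μ₂ (g * h) n = 1 - μ₂ * j := by
    unfold ww; rw [hvFn]
    linarith [hμ₂nj, hmuexp]
  have hA2strict : ∀ i ∈ (g * h).support, i ≠ j → i ≠ n →
      1 - μ₂ * j < ww p μ₂ (g * h) i := by
    intro i hi hij hin
    have hile : i ≤ n := hsupple i hi
    unfold ww
    rcases eq_or_ne i 0 with rfl | hi0
    · rw [hvF0]
      have hlt1 : (1 : ℚ) < μ₂ * j := by
        rw [hμ₂, div_mul_eq_mul_div, lt_div_iff₀ hnjQ]
        nlinarith
      push_cast
      linarith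
    rcases lt_or_ge i j with hlt | hge
    · have hv := hlow1 i hi (by omega) (le_of_lt hlt)
      have hvQ : (1 : ℚ) ≤ padicValInt p ((g * h).coeff i) := by exact_mod_cast hv
      have hiQ : (i : ℚ) < j := by exact_mod_cast hlt
      have := mul_lt_mul_of_pos_left hiQ hμ₂pos
      linarith
    · have hjlt : j < i := by omega
      have hilt : i < n := by omega
      have hv := hlowk i hi hjlt
      have hvQ : (k : ℚ) ≤ padicValInt p ((g * h).coeff i) := by exact_mod_cast hv
      have hiQ : (i : ℚ) < n := by exact_mod_cast hilt
      have := mul_lt_mul_of_pos_left hiQ hμ₂pos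
      linarith [hμ₂nj, hmuexp]
  have hwm2F : wm p μ₂ (g * h) hF = 1 - μ₂ * j := by
    apply le_antisymm
    · rw [← hAj2]; exact wm_le p μ₂ _ hF hjmem
    · unfold wm
      apply Finset.le_inf'
      intro i hi
      rcases eq_or_ne i j with rfl | hij
      · rw [hAj2]
      rcases eq_or_ne i n with rfl | hin
      · rw [hAn2]
      · exact le_of_lt (hA2strict i hi hij hin)
  have hii2F : ii p μ₂ (g * h) hF = j := by
    apply le_antisymm
    · exact ii_min p μ₂ _ hF hjmem (by rw [hAj2, hwm2F])
    · obtain ⟨hmem, hval⟩ := ii_mem p μ₂ (g * h) hF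
      by_contra hc
      push_neg at hc
      have hpos := hA2strict _ hmem (by omega) (by omega)
      · rw [hval, hwm2F] at hpos
        exact lt_irrefl _ hpos
  have hjj2F : jj p μ₂ (g * h) hF = n := by
    apply le_antisymm
    · exact hsupple _ (jj_mem p μ₂ (g * h) hF).1
    · exact jj_max p μ₂ _ hF hnmem (by rw [hAn2, hwm2F])
  -- g, h side basics
  have hb0c0 : (g * h).coeff 0 = g.coeff 0 * h.coeff 0 := Polynomial.mul_coeff_zero g h
  have hb0 : g.coeff 0 ≠ 0 := fun hz => hF0 (by rw [hb0c0, hz, zero_mul])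
  have hc0 : h.coeff 0 ≠ 0 := fun hz => hF0 (by rw [hb0c0, hz, mul_zero])
  have hvb0 : padicValInt p (g.coeff 0) = 0 ∧ padicValInt p (h.coeff 0) = 0 := by
    have := padicValInt.mul (p := p) hb0 hc0
    rw [← hb0c0, hvF0] at this
    omega
  have h0gmem : (0 : ℕ) ∈ g.support := mem_support_iff.mpr hb0
  have h0hmem : (0 : ℕ) ∈ h.support := mem_support_iff.mpr hc0
  -- Gauss additivity
  obtain ⟨hwm1mul, _⟩ := gauss_ii p μ₁ g h hg0 hh0 hF
  obtain ⟨hwm2mul, hii2mul⟩ := gauss_ii p μ₂ g h hg0 hh0 hF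
  have hjj1mul := gauss_jj p μ₁ g h hg0 hh0 hF
  have hjj2mul := gauss_jj p μ₂ g h hg0 hh0 hF
  -- jj₂ g = r and jj₂ h = s
  have hjjg2le : jj p μ₂ g hg0 ≤ r := Polynomial.le_natDegree_of_mem_supp _ (jj_mem p μ₂ g hg0).1
  have hjjh2le : jj p μ₂ h hh0 ≤ s := Polynomial.le_natDegree_of_mem_supp _ (jj_mem p μ₂ h hh0).1
  rw [hjj2F] at hjj2mul
  have hjjg2 : jj p μ₂ g hg0 = r := by omega
  -- sums
  rw [hii2F] at hii2mul
  rw [hjj1F] at hjj1mul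
  have hiih2le : ii p μ₂ h hh0 ≤ s := Polynomial.le_natDegree_of_mem_supp _ (ii_mem p μ₂ h hh0).1
  have hcmpg := slope_mono p hμlt g hg0
  have hcmph := slope_mono p hμlt h hh0
  have htg : jj p μ₁ g hg0 = ii p μ₂ g hg0 := by omega
  -- wm₁ g = 0
  have hww1g0 : ww p μ₁ g 0 = padicValInt p (g.coeff 0) := by
    unfold ww; push_cast; ring
  have hww1h0 : ww p μ₁ h 0 = padicValInt p (h.coeff 0) := by
    unfold ww; push_cast; ring
  have hwmg1le : wm p μ₁ g hg0 ≤ 0 := by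
    have := wm_le p μ₁ g hg0 h0gmem
    rw [hww1g0, hvb0.1] at this
    simpa using this
  have hwmh1le : wm p μ₁ h hh0 ≤ 0 := by
    have := wm_le p μ₁ h hh0 h0hmem
    rw [hww1h0, hvb0.2] at this
    simpa using this
  rw [hwm1F] at hwm1mul
  have hwmg1 : wm p μ₁ g hg0 = 0 := by linarith
  -- t := jj₁ g satisfies t = 0 or t = j
  set t := jj p μ₁ g hg0 with htdef
  have htle : t ≤ j := by omega
  have htval : ww p μ₁ g t = 0 := by rw [(jj_mem p μ₁ g hg0).2, hwmg1]
  have htjmul : t = j * padicValInt p (g.coeff t) := by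
    unfold ww at htval
    rw [hμ₁] at htval
    have : (t : ℚ) = (j : ℚ) * padicValInt p (g.coeff t) := by
      field_simp at htval
      linarith
    exact_mod_cast this
  have htj : t = 0 ∨ t = j := by
    rcases Nat.eq_zero_or_pos (padicValInt p (g.coeff t)) with hz | hpos
    · left; rw [hz, Nat.mul_zero] at htjmul; exact htjmul
    · right
      have := Nat.le_mul_of_pos_right j hpos
      omega
  -- slope-2 equality between t and r on g
  have htii : t = ii p μ₂ g hg0 := htg
  have he1 : ww p μ₂ g t = wm p μ₂ g hg0 := by
    rw [htii]; exact (ii_mem p μ₂ g hg0).2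
  have he2 : ww p μ₂ g r = wm p μ₂ g hg0 := by
    rw [← hjjg2]; exact (jj_mem p μ₂ g hg0).2
  have heq : (padicValInt p (g.coeff t) : ℚ) - μ₂ * t =
      (padicValInt p (g.coeff r) : ℚ) - μ₂ * r := by
    have := he1.trans he2.symm
    unfold ww at this
    exact this
  set vt := padicValInt p (g.coeff t) with hvt
  set vr := padicValInt p (g.coeff r) with hvr
  have hQ : ((vr : ℚ) - vt) * ((n : ℚ) - j) = ((k : ℚ) - 1) * ((r : ℚ) - t) := by
    linear_combination (-((n : ℚ) - j)) * heq + ((r : ℚ) - (t : ℚ)) * hμ₂nj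
  have hrt : t ≤ r := by
    have := ii_le_jj p μ₂ g hg0
    omega
  have hrtQ : (0 : ℚ) ≤ (r : ℚ) - t := by
    have : (t : ℚ) ≤ r := by exact_mod_cast hrt
    linarith
  have hZeq : ((vr : ℤ) - vt) * ((n : ℤ) - j) = ((k : ℤ) - 1) * ((r : ℤ) - t) := by
    exact_mod_cast hQ
  have hcop : IsCoprime ((n : ℤ) - j) ((k : ℤ) - 1) := by
    rw [Int.isCoprime_iff_gcd_eq_one]
    have e1 : (n : ℤ) - j = ((n - j : ℕ) : ℤ) := by
      push_cast [Nat.cast_sub (by omega : j ≤ n)]; ring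
    have e2 : (k : ℤ) - 1 = ((k - 1 : ℕ) : ℤ) := by
      push_cast [Nat.cast_sub (by omega : 1 ≤ k)]; ring
    rw [e1, e2, Int.gcd_natCast_natCast, Nat.gcd_comm]
    exact hgcd
  have hdvd2 : ((n : ℤ) - j) ∣ ((k : ℤ) - 1) * ((r : ℤ) - t) :=
    ⟨(vr : ℤ) - vt, by linarith [hZeq]⟩
  have hdvd3 : ((n : ℤ) - j) ∣ ((r : ℤ) - t) := hcop.dvd_of_dvd_mul_left hdvd2
  obtain ⟨m, hm⟩ := hdvd3
  have hub : (r : ℤ) - t ≤ (n : ℤ) - j := by omega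
  have hlb : (0 : ℤ) ≤ (r : ℤ) - t := by omega
  have hnj1 : (1 : ℤ) ≤ (n : ℤ) - j := by omega
  have hm0 : 0 ≤ m := by
    by_contra hmn
    push_neg at hmn
    have h5 : ((n : ℤ) - j) * m ≤ ((n : ℤ) - j) * (-1) :=
      mul_le_mul_of_nonneg_left (by omega) (by omega)
    linarith
  have hm1 : m ≤ 1 := by
    by_contra hmn
    push_neg at hmn
    have h5 : ((n : ℤ) - j) * 2 ≤ ((n : ℤ) - j) * m :=
      mul_le_mul_of_nonneg_left (by omega) (by omega)
    linarith
  interval_cases m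
  · -- r = t
    have hr : (r : ℤ) = t := by linarith
    have hrt' : r = t := by exact_mod_cast hr
    left
    omega
  · -- r - t = n - j
    have hr : (r : ℤ) - t = (n : ℤ) - j := by linarith
    omega

end Gauss


end Cor146

open Cor146 in
theorem corollary_1_46 (n : ℕ) (hn : 1 ≤ n) (a : ℕ → ℤ)
    (ha0 : a 0 ≠ 0) (han : a n ≠ 0)
    (p q : ℕ) (hp : p.Prime) (hq : q.Prime) (hpq : p ≠ q)
    (j₁ j₂ : ℕ) (hj1 : 1 ≤ j₁) (hj1n : j₁ ≤ n - 1) (hj2 : 1 ≤ j₂) (hj2n : j₂ ≤ n - 1)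
    (hjne : j₁ ≠ j₂) (hjsum : j₁ + j₂ ≠ n)
    (k₁ k₂ : ℕ) (hk1 : 0 < k₁) (hk2 : 0 < k₂)
    (hk1j : k₁ * j₁ > n) (hk2j : k₂ * j₂ > n)
    (hp0 : ¬ (p : ℤ) ∣ a 0)
    (hp1 : ∀ i, 0 < i → i ≤ j₁ → (p : ℤ) ∣ a i)
    (hp2 : ¬ (p : ℤ)^2 ∣ a j₁)
    (hp3 : ∀ i, j₁ < i → i ≤ n → (p : ℤ)^k₁ ∣ a i)
    (hp4 : ¬ (p : ℤ)^(k₁+1) ∣ a n)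
    (hq0 : ¬ (q : ℤ) ∣ a 0)
    (hq1 : ∀ i, 0 < i → i ≤ j₂ → (q : ℤ) ∣ a i)
    (hq2 : ¬ (q : ℤ)^2 ∣ a j₂)
    (hq3 : ∀ i, j₂ < i → i ≤ n → (q : ℤ)^k₂ ∣ a i)
    (hq4 : ¬ (q : ℤ)^(k₂+1) ∣ a n)
    (hg1 : Nat.gcd (k₁ - 1) (n - j₁) = 1)
    (hg2 : Nat.gcd (k₂ - 1) (n - j₂) = 1) :
    Irreducible ((∑ i ∈ range (n+1), C (a i) * X ^ i).map (Int.castRingHom ℚ)) := by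
  classical
  haveI := Fact.mk hp
  haveI := Fact.mk hq
  set f : Polynomial ℤ := ∑ i ∈ range (n+1), C (a i) * X ^ i with hfdef
  have hcoeff : ∀ m, m ≤ n → f.coeff m = a m := by
    intro m hm
    rw [hfdef, Polynomial.finset_sum_coeff]
    simp only [Polynomial.coeff_C_mul, Polynomial.coeff_X_pow, mul_ite, mul_one, mul_zero]
    rw [Finset.sum_ite_eq (range (n+1)) m a]
    simp [Nat.lt_succ_iff.mpr hm]
  have hfne : f ≠ 0 := by
    intro hz
    apply ha0
    rw [← hcoeff 0 (by omega), hz, Polynomial.coeff_zero]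
  have hfdeg : f.natDegree = n := by
    apply le_antisymm
    · apply Polynomial.natDegree_sum_le_of_forall_le
      intro i hi
      calc (C (a i) * X ^ i).natDegree ≤ (C (a i)).natDegree + (X ^ i : Polynomial ℤ).natDegree :=
            Polynomial.natDegree_mul_le
        _ ≤ i := by simp [Polynomial.natDegree_X_pow]
        _ ≤ n := by simpa using Nat.lt_succ_iff.mp (Finset.mem_range.mp hi)
    · apply Polynomial.le_natDegree_of_ne_zero
      rw [hcoeff n le_rfl]
      exact han
  have hnofact : ∀ g h : Polynomial ℤ, f = g * h →
      1 ≤ g.natDegree → 1 ≤ h.natDegree → False := by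
    intro g h hf hgd hhd
    have hdeg : (g * h).natDegree = n := by rw [← hf, hfdeg]
    have hc : ∀ m, m ≤ n → (g * h).coeff m = a m := by
      intro m hm; rw [← hf]; exact hcoeff m hm
    have r1 := core p n j₁ k₁ g h hj1 (by omega) hk1j hg1 hdeg
      (by rw [hc 0 (by omega)]; exact hp0)
      (fun i hi hij => by rw [hc i (by omega)]; exact hp1 i hi hij)
      (by rw [hc j₁ (by omega)]; exact hp2)
      (fun i hij hin => by rw [hc i hin]; exact hp3 i hij hin)
      (by rw [hc n le_rfl]; exact hp4) hgd hhd
    have r2 := core q n j₂ k₂ g h hj2 (by omega) hk2j hg2 hdeg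
      (by rw [hc 0 (by omega)]; exact hq0)
      (fun i hi hij => by rw [hc i (by omega)]; exact hq1 i hi hij)
      (by rw [hc j₂ (by omega)]; exact hq2)
      (fun i hij hin => by rw [hc i hin]; exact hq3 i hij hin)
      (by rw [hc n le_rfl]; exact hq4) hgd hhd
    rcases r1 with h1 | h1 <;> rcases r2 with h2 | h2 <;> omega
  -- reduce to primitive part
  set f₀ : Polynomial ℤ := f.primPart with hf₀def
  have hfc : f = C f.content * f₀ := f.eq_C_content_mul_primPart
  have hcne : f.content ≠ 0 := fun hz => hfne (Polynomial.content_eq_zero_iff.mp hz)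
  have hprim : f₀.IsPrimitive := f.isPrimitive_primPart
  have hf₀deg : f₀.natDegree = n := by rw [hf₀def, Polynomial.natDegree_primPart, hfdeg]
  have hirr0 : Irreducible f₀ := by
    constructor
    · intro hu
      have := Polynomial.natDegree_eq_zero_of_isUnit hu
      omega
    · intro g h hgh
      rcases Nat.eq_zero_or_pos g.natDegree with hg0 | hg0
      · left
        rw [Polynomial.eq_C_of_natDegree_eq_zero hg0]
        refine Polynomial.isUnit_C.mpr (hprim (g.coeff 0) ?_)
        rw [← Polynomial.eq_C_of_natDegree_eq_zero hg0]
        exact ⟨h, hgh⟩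
      rcases Nat.eq_zero_or_pos h.natDegree with hh0 | hh0
      · right
        rw [Polynomial.eq_C_of_natDegree_eq_zero hh0]
        refine Polynomial.isUnit_C.mpr (hprim (h.coeff 0) ?_)
        rw [← Polynomial.eq_C_of_natDegree_eq_zero hh0]
        exact ⟨g, by rw [hgh, mul_comm]⟩
      exfalso
      have hgne : g ≠ 0 := fun hz => by simp [hz] at hg0
      apply hnofact (C f.content * g) h
      · conv_lhs => rw [hfc, hgh]
        rw [mul_assoc]
      · rw [Polynomial.natDegree_mul (Polynomial.C_ne_zero.mpr hcne) hgne,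
          Polynomial.natDegree_C]
        omega
      · exact hh0
  have hirrQ : Irreducible (f₀.map (Int.castRingHom ℚ)) :=
    (Polynomial.IsPrimitive.Int.irreducible_iff_irreducible_map_cast hprim).mp hirr0
  have hmapeq : f.map (Int.castRingHom ℚ) =
      C ((f.content : ℚ)) * f₀.map (Int.castRingHom ℚ) := by
    conv_lhs => rw [hfc]
    rw [Polynomial.map_mul, Polynomial.map_C]
    rfl
  have hu : IsUnit (C ((f.content : ℚ))) := by
    refine Polynomial.isUnit_C.mpr (isUnit_iff_ne_zero.mpr ?_)
    exact_mod_cast hcne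
  have hassoc : Associated (f₀.map (Int.castRingHom ℚ)) (f.map (Int.castRingHom ℚ)) :=
    ⟨hu.unit, by rw [IsUnit.unit_spec, hmapeq, mul_comm]⟩
  exact hassoc.irreducible hirrQ
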